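/- arXiv:0805.3443 — 2 statements merged into one kernel-verified Lean document; each statement's English description precedes it below -/
import Mathlib

section
/- Let H₁ = p_x p_y + γ₁xy + γ₂/√(xy³) + γ₃/y² and H₂ = (p_x x - p_y y)²/4 - γ₂√(x/y) - γ₃ x/y on the domain x > 0, y > 0. Then {H₁, H₂} = 0 under the canonical Poisson bracket in variables (x, y, p_x, p_y). -/
noncomputable def pb (F G : ℝ → ℝ → ℝ → ℝ → ℝ) (x y px py : ℝ) : ℝ :=
  deriv (fun t => F x y t py) px * deriv (fun t => G t y px py) x
  - deriv (fun t => F t y px py) x * deriv (fun t => G x y t py) px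
  + deriv (fun t => F x y px t) py * deriv (fun t => G x t px py) y
  - deriv (fun t => F x t px py) y * deriv (fun t => G x y px t) py

noncomputable def H₁new (γ₁ γ₂ γ₃ : ℝ) : ℝ → ℝ → ℝ → ℝ → ℝ :=
  fun x y px py => px*py + γ₁*x*y + γ₂ / Real.sqrt (x*y^3) + γ₃ / y^2

noncomputable def H₂new (γ₂ γ₃ : ℝ) : ℝ → ℝ → ℝ → ℝ → ℝ :=
  fun x y px py => (px*x - py*y)^2/4 - γ₂ * Real.sqrt (x/y) - γ₃ * (x/y)

theorem stmt9 (γ₁ γ₂ γ₃ : ℝ) (x y px py : ℝ) (hx : 0 < x) (hy : 0 < y) :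
    pb (H₁new γ₁ γ₂ γ₃) (H₂new γ₂ γ₃) x y px py = 0 := by
  have hxy3 : (0:ℝ) < x * y ^ 3 := by positivity
  have hxdy : (0:ℝ) < x / y := by positivity
  set s := Real.sqrt (x * y ^ 3) with hs_def
  set r := Real.sqrt (x / y) with hr_def
  have hs0 : 0 < s := Real.sqrt_pos.mpr hxy3
  have hr0 : 0 < r := Real.sqrt_pos.mpr hxdy
  have hss : s ^ 2 = x * y ^ 3 := Real.sq_sqrt hxy3.le
  have hrr : r ^ 2 = x / y := Real.sq_sqrt hxdy.le
  have hsr : s = y ^ 2 * r := by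
    rw [hs_def, hr_def, show x * y ^ 3 = (y ^ 2) ^ 2 * (x / y) by field_simp,
      Real.sqrt_mul (by positivity), Real.sqrt_sq (by positivity : (0:ℝ) ≤ y ^ 2)]
  -- ∂H₁/∂p_x
  have d1px : deriv (fun t => H₁new γ₁ γ₂ γ₃ x y t py) px = py := by
    have h : HasDerivAt (fun t => H₁new γ₁ γ₂ γ₃ x y t py) (1 * py) px := by
      unfold H₁new
      exact (((hasDerivAt_id px).mul_const py).add_const (γ₁*x*y)).add_const
        (γ₂ / Real.sqrt (x*y^3)) |>.add_const (γ₃ / y^2)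
    rw [h.deriv]; ring
  -- ∂H₁/∂p_y
  have d1py : deriv (fun t => H₁new γ₁ γ₂ γ₃ x y px t) py = px := by
    have h : HasDerivAt (fun t => H₁new γ₁ γ₂ γ₃ x y px t) (px * 1) py := by
      unfold H₁new
      exact (((hasDerivAt_id py).const_mul px).add_const (γ₁*x*y)).add_const
        (γ₂ / Real.sqrt (x*y^3)) |>.add_const (γ₃ / y^2)
    rw [h.deriv]; ring
  -- ∂H₁/∂x
  have d1x : deriv (fun t => H₁new γ₁ γ₂ γ₃ t y px py) x
      = γ₁*y - γ₂/(2*x*s) := by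
    have hu : HasDerivAt (fun t : ℝ => t * y^3) (1 * y^3) x :=
      (hasDerivAt_id x).mul_const _
    have hsq : HasDerivAt (fun t : ℝ => Real.sqrt (t * y^3))
        (1 * y^3 / (2 * s)) x := hu.sqrt hxy3.ne'
    have hq : HasDerivAt (fun t : ℝ => γ₂ / Real.sqrt (t * y^3))
        ((0 * s - γ₂ * (1 * y^3 / (2 * s))) / s ^ 2) x :=
      (hasDerivAt_const x γ₂).div hsq hs0.ne'
    have h : HasDerivAt (fun t => H₁new γ₁ γ₂ γ₃ t y px py)
        (0 + γ₁ * 1 * y + (0 * s - γ₂ * (1 * y^3 / (2 * s))) / s ^ 2 + 0) x := by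
      unfold H₁new
      exact (((hasDerivAt_const x (px*py)).add
        (((hasDerivAt_id x).const_mul γ₁).mul_const y)).add hq).add
        (hasDerivAt_const x (γ₃ / y^2))
    rw [h.deriv, hss]
    field_simp
    ring
  -- ∂H₁/∂y
  have d1y : deriv (fun t => H₁new γ₁ γ₂ γ₃ x t px py) y
      = γ₁*x - 3*γ₂/(2*y*s) - 2*γ₃/y^3 := by
    have hu : HasDerivAt (fun t : ℝ => x * t^3) (x * ((3:ℕ) * y ^ 2)) y :=
      (hasDerivAt_pow 3 y).const_mul x
    have hsq : HasDerivAt (fun t : ℝ => Real.sqrt (x * t^3))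
        (x * ((3:ℕ) * y ^ 2) / (2 * s)) y := hu.sqrt hxy3.ne'
    have hq : HasDerivAt (fun t : ℝ => γ₂ / Real.sqrt (x * t^3))
        ((0 * s - γ₂ * (x * ((3:ℕ) * y ^ 2) / (2 * s))) / s ^ 2) y :=
      (hasDerivAt_const y γ₂).div hsq hs0.ne'
    have hq3 : HasDerivAt (fun t : ℝ => γ₃ / t^2)
        ((0 * y ^ 2 - γ₃ * ((2:ℕ) * y ^ 1)) / (y ^ 2) ^ 2) y :=
      (hasDerivAt_const y γ₃).div (hasDerivAt_pow 2 y) (by positivity)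
    have h : HasDerivAt (fun t => H₁new γ₁ γ₂ γ₃ x t px py)
        (0 + γ₁ * x * 1 + (0 * s - γ₂ * (x * ((3:ℕ) * y ^ 2) / (2 * s))) / s ^ 2
          + (0 * y ^ 2 - γ₃ * ((2:ℕ) * y ^ 1)) / (y ^ 2) ^ 2) y := by
      unfold H₁new
      exact (((hasDerivAt_const y (px*py)).add
        ((hasDerivAt_id y).const_mul (γ₁*x))).add hq).add hq3
    rw [h.deriv, hss]
    push_cast
    field_simp
    ring
  -- ∂H₂/∂p_x
  have d2px : deriv (fun t => H₂new γ₂ γ₃ t y px py) x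
      = (px*x - py*y)*px/2 - γ₂/(2*y*r) - γ₃/y := by
    have hin : HasDerivAt (fun t : ℝ => px * t - py * y) (px * 1) x :=
      ((hasDerivAt_id x).const_mul px).sub_const _
    have hA : HasDerivAt (fun t : ℝ => (px * t - py * y)^2/4)
        (((2:ℕ) * (px * x - py * y) ^ 1 * (px * 1)) / 4) x := (hin.pow 2).div_const 4
    have hd : HasDerivAt (fun t : ℝ => t / y) (1 / y) x := (hasDerivAt_id x).div_const y
    have hB : HasDerivAt (fun t : ℝ => γ₂ * Real.sqrt (t / y))
        (γ₂ * (1 / y / (2 * r))) x := (hd.sqrt hxdy.ne').const_mul γ₂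
    have hC : HasDerivAt (fun t : ℝ => γ₃ * (t / y)) (γ₃ * (1 / y)) x := hd.const_mul γ₃
    have h : HasDerivAt (fun t => H₂new γ₂ γ₃ t y px py)
        ((((2:ℕ) * (px * x - py * y) ^ 1 * (px * 1)) / 4) - γ₂ * (1 / y / (2 * r))
          - γ₃ * (1 / y)) x := by
      unfold H₂new
      exact (hA.sub hB).sub hC
    rw [h.deriv]
    push_cast
    field_simp
    ring
  -- ∂H₂/∂x(p_x slot)
  have d2x : deriv (fun t => H₂new γ₂ γ₃ x y t py) px
      = (px*x - py*y)*x/2 := by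
    have hin : HasDerivAt (fun t : ℝ => t * x - py * y) (1 * x) px :=
      ((hasDerivAt_id px).mul_const x).sub_const _
    have h : HasDerivAt (fun t => H₂new γ₂ γ₃ x y t py)
        (((2:ℕ) * (px * x - py * y) ^ 1 * (1 * x)) / 4) px := by
      unfold H₂new
      exact (((hin.pow 2).div_const 4).sub_const (γ₂ * Real.sqrt (x/y))).sub_const
        (γ₃ * (x/y))
    rw [h.deriv]
    push_cast
    ring
  -- ∂H₂/∂y
  have d2y : deriv (fun t => H₂new γ₂ γ₃ x t px py) y
      = -((px*x - py*y)*py/2) + γ₂*x/(2*y^2*r) + γ₃*x/y^2 := by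
    have hin : HasDerivAt (fun t : ℝ => px * x - py * t) (0 - py * 1) y :=
      (hasDerivAt_const y (px*x)).sub ((hasDerivAt_id y).const_mul py)
    have hA : HasDerivAt (fun t : ℝ => (px * x - py * t)^2/4)
        (((2:ℕ) * (px * x - py * y) ^ 1 * (0 - py * 1)) / 4) y := (hin.pow 2).div_const 4
    have hd : HasDerivAt (fun t : ℝ => x / t) ((0 * y - x * 1) / y ^ 2) y :=
      (hasDerivAt_const y x).div (hasDerivAt_id y) hy.ne'
    have hB : HasDerivAt (fun t : ℝ => γ₂ * Real.sqrt (x / t))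
        (γ₂ * ((0 * y - x * 1) / y ^ 2 / (2 * r))) y :=
      (hd.sqrt hxdy.ne').const_mul γ₂
    have hC : HasDerivAt (fun t : ℝ => γ₃ * (x / t))
        (γ₃ * ((0 * y - x * 1) / y ^ 2)) y := hd.const_mul γ₃
    have h : HasDerivAt (fun t => H₂new γ₂ γ₃ x t px py)
        ((((2:ℕ) * (px * x - py * y) ^ 1 * (0 - py * 1)) / 4)
          - γ₂ * ((0 * y - x * 1) / y ^ 2 / (2 * r))
          - γ₃ * ((0 * y - x * 1) / y ^ 2)) y := by
      unfold H₂new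
      exact (hA.sub hB).sub hC
    rw [h.deriv]
    push_cast
    field_simp
    ring
  -- ∂H₂/∂p_y
  have d2py : deriv (fun t => H₂new γ₂ γ₃ x y px t) py
      = -((px*x - py*y)*y/2) := by
    have hin : HasDerivAt (fun t : ℝ => px * x - t * y) (0 - 1 * y) py :=
      (hasDerivAt_const py (px*x)).sub ((hasDerivAt_id py).mul_const y)
    have h : HasDerivAt (fun t => H₂new γ₂ γ₃ x y px t)
        (((2:ℕ) * (px * x - py * y) ^ 1 * (0 - 1 * y)) / 4) py := by
      unfold H₂new
      exact (((hin.pow 2).div_const 4).sub_const (γ₂ * Real.sqrt (x/y))).sub_const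
        (γ₃ * (x/y))
    rw [h.deriv]
    push_cast
    ring
  unfold pb
  rw [d1px, d1py, d1x, d1y, d2px, d2x, d2y, d2py, hsr]
  field_simp
  ring
end

section
/- Drach's claimed integral is wrong: for H₁ = p_x p_y + αy^{-3/2} + βxy^{-3/2} + γx with (α,β,γ) not all satisfying degenerate conditions (e.g., β ≠ 0), the cubic function K₃ = 6(-y)(∂H₁/∂x · p_y - p_x · ∂H₁/∂y) - 3p_x²p_y does NOT Poisson-commute with H₁: {H₁, K₃} ≠ 0 as a function on the domain y > 0. -/
noncomputable def H₁dr (α β γ : ℝ) : ℝ → ℝ → ℝ → ℝ → ℝ :=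
  fun x y px py => px*py + α / (y * Real.sqrt y) + β*x / (y * Real.sqrt y) + γ*x

noncomputable def K₃dr (α β γ : ℝ) : ℝ → ℝ → ℝ → ℝ → ℝ :=
  fun x y px py =>
    6*(-y) * ((β / (y * Real.sqrt y) + γ) * py
      - px * (-(3/2) * (α + β*x) / (y^2 * Real.sqrt y)))
    - 3*px^2*py

theorem stmt12 (α β γ : ℝ) (hβ : β ≠ 0) :
    ¬ (∀ x y px py : ℝ, 0 < y →
        pb (H₁dr α β γ) (K₃dr α β γ) x y px py = 0) := by
  intro h
  have key := h ((1-α)/β) 1 1 0 one_pos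
  simp only [pb, H₁dr, K₃dr] at key
  norm_num [Real.sqrt_one] at key
  have hc : α + β * ((1 - α) / β) = 1 := by field_simp; ring
  rw [hc] at key
  have hts : HasDerivAt (fun t : ℝ => t * Real.sqrt t) (3/2) 1 := by
    have := (hasDerivAt_id (1:ℝ)).fun_mul (Real.hasDerivAt_sqrt one_ne_zero)
    convert! this using 1 <;> norm_num [Real.sqrt_one]
  have ht2s : HasDerivAt (fun t : ℝ => t^2 * Real.sqrt t) (5/2) 1 := by
    have := (hasDerivAt_pow 2 (1:ℝ)).fun_mul (Real.hasDerivAt_sqrt one_ne_zero)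
    convert! this using 1 <;> norm_num [Real.sqrt_one]
  have hne : (fun t : ℝ => t * Real.sqrt t) 1 ≠ 0 := by norm_num [Real.sqrt_one]
  have hne2 : (fun t : ℝ => t^2 * Real.sqrt t) 1 ≠ 0 := by norm_num [Real.sqrt_one]
  have h1 : HasDerivAt (fun t : ℝ => α + β * t + γ * t) (β + γ) ((1-α)/β) := by
    have := ((hasDerivAt_const ((1-α)/β) α).fun_add
      ((hasDerivAt_id ((1-α)/β)).const_mul β)).fun_add ((hasDerivAt_id ((1-α)/β)).const_mul γ)
    simpa using this
  have h2 : HasDerivAt (fun t : ℝ => 6 * t * (-(3/2 * 1) / (t^2 * Real.sqrt t))) (27/2) 1 := by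
    have hinner := (hasDerivAt_const (1:ℝ) (-(3/2 * 1))).fun_div ht2s hne2
    have := (((hasDerivAt_id (1:ℝ)).const_mul 6).fun_mul hinner)
    convert! this using 1 <;> norm_num [Real.sqrt_one] <;> ring
  have h3 : HasDerivAt (fun y : ℝ => α / (y * Real.sqrt y) + β * ((1-α)/β) / (y * Real.sqrt y))
      (-(3/2) * α + -(3/2) * (β * ((1-α)/β))) 1 := by
    have := ((hasDerivAt_const (1:ℝ) α).fun_div hts hne).fun_add
      ((hasDerivAt_const (1:ℝ) (β * ((1-α)/β))).fun_div hts hne)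
    convert! this using 1 <;> norm_num [Real.sqrt_one] <;> ring
  have h4 : HasDerivAt (fun t : ℝ => -(6 * ((β + γ) * t + 3/2 * 1)) - 3 * t)
      (-(6 * (β + γ)) - 3) 0 := by
    have := ((((hasDerivAt_id (0:ℝ)).const_mul (β + γ)).add_const (3/2 * 1)).const_mul 6).fun_neg.fun_sub
      ((hasDerivAt_id (0:ℝ)).const_mul 3)
    simpa using this
  rw [h1.deriv, h2.deriv, h3.deriv, h4.deriv] at key
  have hb : β * ((1 - α) / β) = 1 - α := by field_simp
  rw [hb] at key
  nlinarith [key]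
end
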